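/- For n ≥ 1, let F* be the disjoint union of the stars K_{1,⌊n/1⌋}, K_{1,⌊n/2⌋}, …, K_{1,⌊n/n⌋}. Then every star forest with at most n vertices is isomorphic to an induced subgraph of F*; moreover, F* has exactly Σ_{i=1}^{n} (⌊n/i⌋ + 1) vertices, and this number is at most n·(ln n + 2). -/

import Mathlib

open SimpleGraph

/-- The star `K_{1,p}`, with center `0`. -/
def starGraph (p : ℕ) : SimpleGraph (Fin (p + 1)) :=
  SimpleGraph.fromRel (fun i _ => i = 0)

/-- A star forest: every connected component is a star `K_{1,p}` for some `p ≥ 0`. -/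
def IsStarForest {V : Type*} (G : SimpleGraph V) : Prop :=
  ∀ c : G.ConnectedComponent, ∃ p, Nonempty (G.induce c.supp ≃g _root_.starGraph p)

/-- The star forest `F* = K_{1,⌊n/1⌋} + K_{1,⌊n/2⌋} + ⋯ + K_{1,⌊n/n⌋}`;
the `i`-th summand (for `i : Fin n`) is the star `K_{1, n/(i+1)}` with center `⟨i, 0⟩`. -/
def Fstar (n : ℕ) : SimpleGraph (Σ i : Fin n, Fin (n / ((i : ℕ) + 1) + 1)) :=
  SimpleGraph.fromRel (fun x y => x.1 = y.1 ∧ (x.2 : ℕ) = 0)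

private theorem part1_aux (n : ℕ) (W : Type) [Fintype W] (G : SimpleGraph W) (hG : IsStarForest G)
    (hcard : Fintype.card W ≤ n) : Nonempty (G ↪g Fstar n) := by
  classical
  haveI : Fintype G.ConnectedComponent := Fintype.ofFinite _
  haveI : ∀ c : G.ConnectedComponent, Fintype c.supp := fun c => Fintype.ofFinite _
  choose p hφ using hG
  let φ : ∀ c : G.ConnectedComponent, G.induce c.supp ≃g _root_.starGraph (p c) := fun c => (hφ c).some
  let s : G.ConnectedComponent → ℕ := fun c => p c + 1
  have hsize : ∀ c : G.ConnectedComponent, Fintype.card c.supp = s c := fun c => by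
    simpa using Fintype.card_congr (φ c).toEquiv
  have hsum : ∑ c : G.ConnectedComponent, Fintype.card c.supp = Fintype.card W := by
    rw [Fintype.card_congr (Equiv.sigmaFiberEquiv (G.connectedComponentMk)).symm,
      Fintype.card_sigma]
    refine Finset.sum_congr rfl fun c _ => Fintype.card_congr ?_
    exact Equiv.subtypeEquivRight fun v => (ConnectedComponent.mem_supp_iff c v).symm
  have hsle : ∀ c : G.ConnectedComponent, s c ≤ n := fun c => by
    rw [← hsize c]
    exact le_trans (Fintype.card_le_of_embedding (Function.Embedding.subtype _)) hcard
  -- ranking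
  set k := Fintype.card G.ConnectedComponent with hk
  let e : G.ConnectedComponent ≃ Fin k := Fintype.equivFin G.ConnectedComponent
  let g : G.ConnectedComponent → Lex (ℕ × ℕ) := fun c => toLex (n - s c, (e c : ℕ))
  have hginj : Function.Injective g := by
    intro c d h
    have h2 : ((e c : ℕ)) = (e d : ℕ) := congrArg (fun x => (ofLex x).2) h
    exact e.injective (Fin.val_injective h2)
  let T : Finset (Lex (ℕ × ℕ)) := Finset.univ.image g
  have hT : T.card = k := by
    rw [Finset.card_image_of_injective _ hginj, Finset.card_univ]
  let oi := T.orderIsoOfFin hT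
  have hgmem : ∀ c, g c ∈ T := fun c => Finset.mem_image_of_mem g (Finset.mem_univ c)
  let r : G.ConnectedComponent → Fin k := fun c => oi.symm ⟨g c, hgmem c⟩
  have hr : ∀ c, (oi (r c) : Lex (ℕ × ℕ)) = g c := fun c => by
    simp [r, oi.apply_symm_apply]
  have hrinj : Function.Injective r := by
    intro c d h
    apply hginj
    rw [← hr c, ← hr d, h]
  have hrmono : ∀ c d, r c ≤ r d ↔ g c ≤ g d := by
    intro c d
    rw [← oi.le_iff_le, ← Subtype.coe_le_coe, hr, hr]
  have hrsurj : Function.Surjective r :=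
    ((Fintype.bijective_iff_injective_and_card r).mpr ⟨hrinj, by simp [hk]⟩).surjective
  -- key inequality
  have hkey : ∀ c : G.ConnectedComponent, ((r c : ℕ) + 1) * s c ≤ n := by
    intro c
    set D : Finset G.ConnectedComponent := Finset.univ.filter (fun d => r d ≤ r c) with hD
    have himg : D.image r = Finset.Iic (r c) := by
      ext j
      simp only [hD, Finset.mem_image, Finset.mem_filter, Finset.mem_univ, true_and,
        Finset.mem_Iic]
      constructor
      · rintro ⟨d, hd, rfl⟩; exact hd
      · intro hj
        obtain ⟨d, rfl⟩ := hrsurj j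
        exact ⟨d, hj, rfl⟩
    have hcardD : D.card = (r c : ℕ) + 1 := by
      rw [← Finset.card_image_of_injective D hrinj, himg, Fin.card_Iic]
    calc ((r c : ℕ) + 1) * s c = ∑ _d ∈ D, s c := by
          rw [Finset.sum_const, hcardD, smul_eq_mul]
      _ ≤ ∑ d ∈ D, s d := by
          refine Finset.sum_le_sum fun d hd => ?_
          have hgd : g d ≤ g c := (hrmono d c).mp (Finset.mem_filter.mp hd).2
          have h1 : n - s d ≤ n - s c := Prod.Lex.monotone_fst _ _ hgd
          have := hsle c; have := hsle d
          omega
      _ ≤ ∑ d : G.ConnectedComponent, s d := Finset.sum_le_sum_of_subset (Finset.filter_subset _ _)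
      _ = Fintype.card W := by rw [← hsum]; exact Finset.sum_congr rfl fun d _ => (hsize d).symm
      _ ≤ n := hcard
  have hrn : ∀ c : G.ConnectedComponent, (r c : ℕ) < n := by
    intro c
    have h1 := hkey c
    have h2 : 1 ≤ s c := Nat.succ_le_succ (Nat.zero_le _)
    nlinarith
  let ι : G.ConnectedComponent → Fin n := fun c => ⟨r c, hrn c⟩
  have hιinj : Function.Injective ι := by
    intro c d h
    have hv : ((ι c : Fin n) : ℕ) = ((ι d : Fin n) : ℕ) := congrArg Fin.val h
    exact hrinj (Fin.ext hv)
  have hpc : ∀ c : G.ConnectedComponent, p c + 1 ≤ n / ((ι c : ℕ) + 1) + 1 := by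
    intro c
    have h2 : p c + 1 ≤ n / ((r c : ℕ) + 1) :=
      (Nat.le_div_iff_mul_le (Nat.succ_pos _)).mpr (by rw [mul_comm]; exact hkey c)
    exact Nat.le_succ_of_le h2
  -- the map
  let ψ : ∀ c : G.ConnectedComponent, c.supp → (Σ i : Fin n, Fin (n / ((i : ℕ) + 1) + 1)) :=
    fun c x => ⟨ι c, Fin.castLE (hpc c) ((φ c) x)⟩
  have ψcongr : ∀ (c d : G.ConnectedComponent) (h : c = d) (x : c.supp) (y : d.supp), (x : W) = (y : W) →
      ψ c x = ψ d y := by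
    rintro c d rfl x y hxy
    have : x = y := Subtype.ext hxy
    rw [this]
  have memsupp : ∀ w : W, w ∈ (G.connectedComponentMk w).supp := fun w => rfl
  let F : W → (Σ i : Fin n, Fin (n / ((i : ℕ) + 1) + 1)) :=
    fun w => ψ (G.connectedComponentMk w) ⟨w, memsupp w⟩
  -- star adjacency
  have hstar : ∀ (q : ℕ) (a b : Fin (q + 1)),
      (_root_.starGraph q).Adj a b ↔ a ≠ b ∧ (a = 0 ∨ b = 0) := by
    intro q a b
    simp only [_root_.starGraph, SimpleGraph.fromRel_adj]
  have hFstar : ∀ (x y : Σ i : Fin n, Fin (n / ((i : ℕ) + 1) + 1)),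
      (Fstar n).Adj x y ↔ x ≠ y ∧ ((x.1 = y.1 ∧ (x.2 : ℕ) = 0) ∨ (y.1 = x.1 ∧ (y.2 : ℕ) = 0)) := by
    intro x y
    simp only [Fstar, SimpleGraph.fromRel_adj]
  -- adjacency within a component
  have hkeyAdj : ∀ (c : G.ConnectedComponent) (x y : c.supp), (Fstar n).Adj (ψ c x) (ψ c y) ↔ G.Adj x y := by
    intro c x y
    have hA : (_root_.starGraph (p c)).Adj ((φ c) x) ((φ c) y) ↔ G.Adj (x : W) (y : W) :=
      (φ c).map_adj_iff
    rw [hFstar, ← hA, hstar]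
    constructor
    · rintro ⟨hne, h⟩
      refine ⟨fun hxy => hne (congrArg (fun z => (⟨ι c, Fin.castLE (hpc c) z⟩ : Σ i : Fin n, Fin (n / ((i : ℕ) + 1) + 1))) hxy), ?_⟩
      rcases h with ⟨-, h0⟩ | ⟨-, h0⟩
      · left; exact Fin.ext (by simpa [ψ] using h0)
      · right; exact Fin.ext (by simpa [ψ] using h0)
    · rintro ⟨hne, h0⟩
      constructor
      · intro hψ
        apply hne
        have h2 : ((ψ c x).2 : ℕ) = ((ψ c y).2 : ℕ) := congrArg (fun z => (z.2 : ℕ)) hψ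
        simp only [ψ, Fin.coe_castLE] at h2
        exact Fin.ext h2
      · rcases h0 with h0 | h0
        · left; exact ⟨rfl, by simp [ψ, h0]⟩
        · right; exact ⟨rfl, by simp [ψ, h0]⟩
  have hneAdj : ∀ (c d : G.ConnectedComponent) (x : c.supp) (y : d.supp), c ≠ d →
      ¬ (Fstar n).Adj (ψ c x) (ψ d y) := by
    intro c d x y hcd hadj
    rw [hFstar] at hadj
    rcases hadj.2 with ⟨h1, -⟩ | ⟨h1, -⟩
    · exact hcd (hιinj h1)
    · exact hcd (hιinj h1.symm)
  -- build the embedding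
  have hinj : Function.Injective F := by
    intro v w h
    have h1 : ι (G.connectedComponentMk v) = ι (G.connectedComponentMk w) :=
      congrArg Sigma.fst h
    have hc : G.connectedComponentMk v = G.connectedComponentMk w := hιinj h1
    have h2 : F w = ψ (G.connectedComponentMk v) ⟨w, by rw [hc]; exact memsupp w⟩ :=
      ψcongr _ _ hc.symm _ _ rfl
    rw [h2] at h
    have h4 : ((ψ (G.connectedComponentMk v) ⟨v, memsupp v⟩).2 : ℕ)
        = ((ψ (G.connectedComponentMk v) ⟨w, by rw [hc]; exact memsupp w⟩).2 : ℕ) :=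
      congrArg (fun z => (z.2 : ℕ)) h
    simp only [ψ, Fin.coe_castLE] at h4
    have h6 := (φ (G.connectedComponentMk v)).toEquiv.injective (Fin.ext h4)
    exact congrArg Subtype.val h6
  refine ⟨⟨⟨F, hinj⟩, ?_⟩⟩
  intro v w
  by_cases hc : G.connectedComponentMk v = G.connectedComponentMk w
  · have h2 : F w = ψ (G.connectedComponentMk v) ⟨w, by rw [hc]; exact memsupp w⟩ :=
      ψcongr _ _ hc.symm _ _ rfl
    show (Fstar n).Adj (F v) (F w) ↔ G.Adj v w
    rw [h2]
    exact hkeyAdj (G.connectedComponentMk v) ⟨v, memsupp v⟩ ⟨w, _⟩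
  · show (Fstar n).Adj (F v) (F w) ↔ G.Adj v w
    constructor
    · intro h
      exact absurd h (hneAdj _ _ _ _ hc)
    · intro h
      exact absurd (SimpleGraph.ConnectedComponent.connectedComponentMk_eq_of_adj h) hc

/-- `F*` contains every star forest on at most `n` vertices as an induced
subgraph, it has exactly `∑_{i=1}^{n} (⌊n/i⌋ + 1)` vertices, and this number is
at most `n (ln n + 2)`. -/
theorem Fstar_universal (n : ℕ) (hn : 1 ≤ n) :
    (∀ (W : Type) [Fintype W] (G : SimpleGraph W), IsStarForest G →
      Fintype.card W ≤ n → Nonempty (G ↪g Fstar n)) ∧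
    Fintype.card (Σ i : Fin n, Fin (n / ((i : ℕ) + 1) + 1)) =
      ∑ i ∈ Finset.range n, (n / (i + 1) + 1) ∧
    ((∑ i ∈ Finset.range n, (n / (i + 1) + 1) : ℕ) : ℝ) ≤ n * (Real.log n + 2) := by
  refine ⟨fun W _ G hG hc => part1_aux n W G hG hc, ?_, ?_⟩
  · simp only [Fintype.card_sigma, Fintype.card_fin]
    exact Fin.sum_univ_eq_sum_range (fun i => n / (i + 1) + 1) n
  · have h1 : ((∑ i ∈ Finset.range n, (n / (i + 1) + 1) : ℕ) : ℝ)
        = ∑ i ∈ Finset.range n, (((n / (i + 1) : ℕ) : ℝ) + 1) := by push_cast; ring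
    have h2 : ∀ i ∈ Finset.range n, (((n / (i + 1) : ℕ) : ℝ) + 1)
        ≤ (n : ℝ) * (((i : ℕ) + 1 : ℝ))⁻¹ + 1 := by
      intro i _
      have := Nat.cast_div_le (α := ℝ) (m := n) (n := i + 1)
      rw [div_eq_mul_inv] at this
      push_cast at this ⊢
      linarith
    have hharm : ∑ i ∈ Finset.range n, ((n : ℝ) * (((i : ℕ) + 1 : ℝ))⁻¹ + 1)
        = (n : ℝ) * (harmonic n : ℝ) + n := by
      rw [Finset.sum_add_distrib, ← Finset.mul_sum]
      simp only [harmonic, Rat.cast_sum, Rat.cast_inv, Rat.cast_natCast]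
      push_cast
      simp only [Finset.sum_const, Finset.card_range, nsmul_eq_mul, mul_one]
    have hlog := harmonic_le_one_add_log n
    have hn' : (0:ℝ) ≤ n := by positivity
    calc ((∑ i ∈ Finset.range n, (n / (i + 1) + 1) : ℕ) : ℝ)
        ≤ ∑ i ∈ Finset.range n, ((n : ℝ) * (((i : ℕ) + 1 : ℝ))⁻¹ + 1) := by
          rw [h1]; exact Finset.sum_le_sum h2
      _ = (n : ℝ) * (harmonic n : ℝ) + n := hharm
      _ ≤ (n : ℝ) * (1 + Real.log n) + n := by nlinarith
      _ = n * (Real.log n + 2) := by ring
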